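/- arXiv:0809.0298 — 3 statements merged into one kernel-verified Lean document; each statement's English description precedes it below -/
import Mathlib

section
/- Let f and g be nonzero polynomials in ℂ[x,y]. Then Trop(f·g) = Trop(f) ∪ Trop(g). -/
open MvPolynomial

/-- The minimal weighted degree `m_{(u,v)}(f) = min { i*u + j*v : (i,j) ∈ supp(f) }`. -/
noncomputable def wdeg (u v : ℤ) (f : MvPolynomial (Fin 2) ℂ) : ℤ :=
  sInf ((fun a : Fin 2 →₀ ℕ => (a 0 : ℤ) * u + (a 1 : ℤ) * v) '' ↑f.support)

/-- The initial form `in_{(u,v)}(f)`: the sum of the terms of `f` whose exponent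
vector attains the minimal weighted degree. -/
noncomputable def initForm (u v : ℤ) (f : MvPolynomial (Fin 2) ℂ) :
    MvPolynomial (Fin 2) ℂ :=
  ∑ a ∈ f.support.filter (fun a => (a 0 : ℤ) * u + (a 1 : ℤ) * v = wdeg u v f),
    monomial a (f.coeff a)

/-- The tropicalization `Trop(f)`: nonzero integer vectors `(u,v)` such that the
initial form `in_{(u,v)}(f)` has at least two monomials. -/
def trop (f : MvPolynomial (Fin 2) ℂ) : Set (ℤ × ℤ) :=
  { uv | uv ≠ (0, 0) ∧ 2 ≤ (initForm uv.1 uv.2 f).support.card }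

/-! ### Auxiliary development -/

/-- Weight of an exponent vector. -/
def wt (u v : ℤ) (a : Fin 2 →₀ ℕ) : ℤ := (a 0 : ℤ) * u + (a 1 : ℤ) * v

lemma wdeg_eq (u v : ℤ) (f : MvPolynomial (Fin 2) ℂ) :
    wdeg u v f = sInf (wt u v '' ↑f.support) := rfl

lemma wt_add (u v : ℤ) (a b : Fin 2 →₀ ℕ) : wt u v (a + b) = wt u v a + wt u v b := by
  simp only [wt, Finsupp.add_apply]
  push_cast; ring

lemma wt_neg (u v : ℤ) (a : Fin 2 →₀ ℕ) : wt (-u) (-v) a = -(wt u v a) := by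
  simp only [wt]; ring

lemma wdeg_le {u v : ℤ} {f : MvPolynomial (Fin 2) ℂ} {a : Fin 2 →₀ ℕ}
    (ha : a ∈ f.support) : wdeg u v f ≤ wt u v a := by
  rw [wdeg_eq]
  exact csInf_le ((f.support.finite_toSet.image _).bddBelow) ⟨a, ha, rfl⟩

lemma exists_wdeg_eq {f : MvPolynomial (Fin 2) ℂ} (hf : f ≠ 0) (u v : ℤ) :
    ∃ a ∈ f.support, wt u v a = wdeg u v f := by
  have hne : (wt u v '' ↑f.support).Nonempty := by
    obtain ⟨a, ha⟩ := Finset.nonempty_iff_ne_empty.mpr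
      (fun h => hf (MvPolynomial.support_eq_empty.mp h))
    exact ⟨wt u v a, ⟨a, ha, rfl⟩⟩
  have hmem := hne.csInf_mem (f.support.finite_toSet.image _)
  rw [← wdeg_eq] at hmem
  obtain ⟨a, ha, h⟩ := hmem
  exact ⟨a, ha, h⟩

lemma coeff_initForm (u v : ℤ) (f : MvPolynomial (Fin 2) ℂ) (a : Fin 2 →₀ ℕ) :
    coeff a (initForm u v f) = if wt u v a = wdeg u v f then coeff a f else 0 := by
  rw [initForm, MvPolynomial.coeff_sum]
  simp only [coeff_monomial]
  rw [Finset.sum_ite_eq' _ a (fun b => coeff b f)]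
  simp only [Finset.mem_filter, MvPolynomial.mem_support_iff]
  by_cases h0 : coeff a f = 0
  · simp [h0]
  · simp [h0, wt]
    congr

lemma support_initForm (u v : ℤ) (f : MvPolynomial (Fin 2) ℂ) :
    (initForm u v f).support
      = f.support.filter (fun a => wt u v a = wdeg u v f) := by
  ext a
  simp only [MvPolynomial.mem_support_iff, coeff_initForm, Finset.mem_filter]
  split_ifs with h <;> simp [h]

lemma initForm_ne_zero {f : MvPolynomial (Fin 2) ℂ} (hf : f ≠ 0) (u v : ℤ) :
    initForm u v f ≠ 0 := by
  obtain ⟨a, ha, hwa⟩ := exists_wdeg_eq hf u v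
  intro h
  rw [MvPolynomial.mem_support_iff] at ha
  have := coeff_initForm u v f a
  rw [h, if_pos hwa] at this
  exact ha ((MvPolynomial.coeff_zero a).symm.trans this).symm

lemma initForm_mul {f g : MvPolynomial (Fin 2) ℂ} (hf : f ≠ 0) (hg : g ≠ 0) (u v : ℤ) :
    initForm u v (f * g) = initForm u v f * initForm u v g ∧
      wdeg u v (f * g) = wdeg u v f + wdeg u v g := by
  classical
  set W : ℤ := wdeg u v f + wdeg u v g with hW
  set P : MvPolynomial (Fin 2) ℂ := initForm u v f * initForm u v g with hP
  -- coefficients agree on the critical level set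
  have hB : ∀ c : Fin 2 →₀ ℕ, wt u v c = W → coeff c (f * g) = coeff c P := by
    intro c hc
    rw [hP, MvPolynomial.coeff_mul, MvPolynomial.coeff_mul]
    refine Finset.sum_congr rfl fun x hx => ?_
    rw [Finset.HasAntidiagonal.mem_antidiagonal] at hx
    rw [coeff_initForm, coeff_initForm]
    by_cases h1 : coeff x.1 f = 0
    · simp [h1]
    by_cases h2 : coeff x.2 g = 0
    · simp [h2]
    have hle1 : wdeg u v f ≤ wt u v x.1 := wdeg_le (MvPolynomial.mem_support_iff.mpr h1)
    have hle2 : wdeg u v g ≤ wt u v x.2 := wdeg_le (MvPolynomial.mem_support_iff.mpr h2)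
    have hsum : wt u v x.1 + wt u v x.2 = W := by rw [← wt_add, hx, hc]
    have e1 : wt u v x.1 = wdeg u v f := by omega
    have e2 : wt u v x.2 = wdeg u v g := by omega
    rw [if_pos e1, if_pos e2]
  -- every exponent of f*g has weight at least W
  have hA : ∀ c ∈ (f * g).support, W ≤ wt u v c := by
    intro c hc
    obtain ⟨a, ha, b, hb, hab⟩ := Finset.mem_add.mp (MvPolynomial.support_mul f g hc)
    rw [← hab, wt_add]
    exact add_le_add (wdeg_le ha) (wdeg_le hb)
  -- the support of P lies exactly on level W
  have hCsup : ∀ c ∈ P.support, wt u v c = W := by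
    intro c hc
    obtain ⟨a, ha, b, hb, hab⟩ := Finset.mem_add.mp (MvPolynomial.support_mul _ _ hc)
    rw [support_initForm, Finset.mem_filter] at ha hb
    rw [← hab, wt_add, ha.2, hb.2]
  have hPne : P ≠ 0 := mul_ne_zero (initForm_ne_zero hf u v) (initForm_ne_zero hg u v)
  obtain ⟨c0, hc0⟩ := Finset.nonempty_iff_ne_empty.mpr
    (fun h => hPne (MvPolynomial.support_eq_empty.mp h))
  have hc0W : wt u v c0 = W := hCsup c0 hc0
  have hc0fg : c0 ∈ (f * g).support := by
    rw [MvPolynomial.mem_support_iff, hB c0 hc0W]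
    exact MvPolynomial.mem_support_iff.mp hc0
  have hfg : f * g ≠ 0 := fun h => by
    rw [h, MvPolynomial.support_zero] at hc0fg; exact absurd hc0fg (Finset.notMem_empty c0)
  have hWdeg : wdeg u v (f * g) = W := by
    refine le_antisymm (hc0W ▸ wdeg_le hc0fg) ?_
    obtain ⟨a, ha, hwa⟩ := exists_wdeg_eq hfg u v
    exact hwa ▸ hA a ha
  refine ⟨?_, hWdeg⟩
  ext c
  rw [coeff_initForm, hWdeg]
  by_cases hc : wt u v c = W
  · rw [if_pos hc]; exact hB c hc
  · rw [if_neg hc]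
    by_contra h
    exact hc (hCsup c (MvPolynomial.mem_support_iff.mpr fun h0 => h h0.symm))

lemma wdeg_mul {f g : MvPolynomial (Fin 2) ℂ} (hf : f ≠ 0) (hg : g ≠ 0) (u v : ℤ) :
    wdeg u v (f * g) = wdeg u v f + wdeg u v g := (initForm_mul hf hg u v).2

/-- If `p` has at least two monomials and `q ≠ 0`, so does `p * q`. -/
lemma two_le_card_support_mul {p q : MvPolynomial (Fin 2) ℂ} (hp : p ≠ 0) (hq : q ≠ 0)
    {a b : Fin 2 →₀ ℕ} (ha : a ∈ p.support) (hb : b ∈ p.support)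
    {u v : ℤ} (hlt : wt u v a < wt u v b) :
    2 ≤ (p * q).support.card := by
  have hpq : p * q ≠ 0 := mul_ne_zero hp hq
  obtain ⟨c1, hc1, hwc1⟩ := exists_wdeg_eq hpq u v
  obtain ⟨c2, hc2, hwc2⟩ := exists_wdeg_eq hpq (-u) (-v)
  obtain ⟨e, he, -⟩ := exists_wdeg_eq hq u v
  rw [wdeg_mul hp hq] at hwc1
  rw [wdeg_mul hp hq] at hwc2
  have h1 : wt u v c1 ≤ wt u v a + wt u v e := by
    rw [hwc1]; exact add_le_add (wdeg_le ha) (wdeg_le he)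
  have h2 : wdeg (-u) (-v) p ≤ -(wt u v b) := (wt_neg u v b) ▸ wdeg_le hb
  have h3 : wdeg (-u) (-v) q ≤ -(wt u v e) := (wt_neg u v e) ▸ wdeg_le he
  have h4 : -(wt u v c2) = wdeg (-u) (-v) p + wdeg (-u) (-v) q := by
    rw [← wt_neg, hwc2]
  have hne : c1 ≠ c2 := by
    intro h
    rw [h] at h1
    omega
  exact Finset.one_lt_card.mpr ⟨c1, hc1, c2, hc2, hne⟩

lemma ne_wt {a b : Fin 2 →₀ ℕ} (hab : a ≠ b) :
    ∃ u v : ℤ, wt u v a ≠ wt u v b := by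
  by_contra h
  push_neg at h
  have h1 := h 1 0
  have h2 := h 0 1
  simp only [wt, mul_one, mul_zero, add_zero, zero_add] at h1 h2
  refine hab (Finsupp.ext fun i => ?_)
  fin_cases i
  · exact_mod_cast h1
  · exact_mod_cast h2

/-- The tropicalization of a product is the union of the tropicalizations. -/
theorem trop_mul (f g : MvPolynomial (Fin 2) ℂ) (hf : f ≠ 0) (hg : g ≠ 0) :
    trop (f * g) = trop f ∪ trop g := by
  ext ⟨u, v⟩
  simp only [trop, Set.mem_setOf_eq, Set.mem_union]
  have key : 2 ≤ (initForm u v (f * g)).support.card ↔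
      2 ≤ (initForm u v f).support.card ∨ 2 ≤ (initForm u v g).support.card := by
    rw [(initForm_mul hf hg u v).1]
    set p := initForm u v f with hp
    set q := initForm u v g with hq
    have hp0 : p ≠ 0 := initForm_ne_zero hf u v
    have hq0 : q ≠ 0 := initForm_ne_zero hg u v
    constructor
    · intro h2
      by_contra hcon
      push_neg at hcon
      obtain ⟨hcp, hcq⟩ := hcon
      have := Finset.card_le_card (MvPolynomial.support_mul p q)
      have hle := Finset.card_add_le (s := p.support) (t := q.support)
      have : (p * q).support.card ≤ 1 := by
        calc (p * q).support.card ≤ p.support.card * q.support.card :=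
              le_trans (Finset.card_le_card (MvPolynomial.support_mul p q)) hle
        _ ≤ 1 * 1 := Nat.mul_le_mul (by omega) (by omega)
        _ = 1 := by norm_num
      omega
    · rintro (h2 | h2)
      · obtain ⟨a, ha, b, hb, hab⟩ := Finset.one_lt_card.mp h2
        obtain ⟨u', v', hw⟩ := ne_wt hab
        rcases hw.lt_or_gt with hlt | hlt
        · exact two_le_card_support_mul hp0 hq0 ha hb hlt
        · exact two_le_card_support_mul hp0 hq0 hb ha hlt
      · obtain ⟨a, ha, b, hb, hab⟩ := Finset.one_lt_card.mp h2
        obtain ⟨u', v', hw⟩ := ne_wt hab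
        rw [mul_comm]
        rcases hw.lt_or_gt with hlt | hlt
        · exact two_le_card_support_mul hq0 hp0 ha hb hlt
        · exact two_le_card_support_mul hq0 hp0 hb ha hlt
  tauto
end

section
/- Let r be a polynomial in ℂ[x,y] whose support contains at least two points (i.e. r has at least two monomials with nonzero coefficients). Then r has a zero in the algebraic torus: there exists (x,y) ∈ ℂ² with x ≠ 0, y ≠ 0 and r(x,y) = 0. -/
open MvPolynomial

/-- A one-variable complex polynomial with two nonzero coefficients has a
nonzero root. -/
lemma exists_ne_zero_root (q : Polynomial ℂ) (k₁ k₂ : ℕ) (hk : k₁ ≠ k₂)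
    (h1 : q.coeff k₁ ≠ 0) (h2 : q.coeff k₂ ≠ 0) : ∃ t : ℂ, t ≠ 0 ∧ q.eval t = 0 := by
  have hq : q ≠ 0 := fun h => h1 (by simp [h])
  set n := q.natTrailingDegree with hn
  have hdvd : (Polynomial.X : Polynomial ℂ) ^ n ∣ q := by
    rw [Polynomial.X_pow_dvd_iff]
    intro d hd
    exact Polynomial.coeff_eq_zero_of_lt_natTrailingDegree hd
  obtain ⟨p, hp⟩ := hdvd
  have hp0 : p ≠ 0 := by rintro rfl; simp at hp; exact hq hp
  have hc0 : p.coeff 0 ≠ 0 := by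
    have : q.coeff n = p.coeff 0 := by
      rw [hp]; simpa using Polynomial.coeff_X_pow_mul p n 0
    rw [← this]
    exact Polynomial.trailingCoeff_nonzero_iff_nonzero.mpr hq
  have hdegq : q.natDegree = n + p.natDegree := by
    rw [hp, Polynomial.natDegree_mul (pow_ne_zero _ Polynomial.X_ne_zero) hp0, Polynomial.natDegree_X_pow]
  have hdegp : 0 < p.natDegree := by
    have hle1 : n ≤ k₁ := Polynomial.natTrailingDegree_le_of_ne_zero h1
    have hle2 : n ≤ k₂ := Polynomial.natTrailingDegree_le_of_ne_zero h2
    have hmax : n < max k₁ k₂ := by omega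
    have : max k₁ k₂ ≤ q.natDegree :=
      max_le (Polynomial.le_natDegree_of_ne_zero h1) (Polynomial.le_natDegree_of_ne_zero h2)
    omega
  obtain ⟨t, ht⟩ := Complex.exists_root (Polynomial.natDegree_pos_iff_degree_pos.mp hdegp)
  refine ⟨t, ?_, ?_⟩
  · rintro rfl
    exact hc0 (by rwa [Polynomial.coeff_zero_eq_eval_zero])
  · rw [hp]
    simp [ht.eq_zero]

/-- A polynomial in two variables with at least two monomials with nonzero
coefficients has a zero in the algebraic torus `(ℂ*)²`. -/
theorem exists_torus_zero (r : MvPolynomial (Fin 2) ℂ) (hcard : 2 ≤ r.support.card) :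
    ∃ x y : ℂ, x ≠ 0 ∧ y ≠ 0 ∧ eval ![x, y] r = 0 := by
  classical
  set M := r.totalDegree + 1 with hM
  set e : (Fin 2 →₀ ℕ) → ℕ := fun m => m 0 + M * m 1 with he
  -- injectivity of e on the support
  have hbound : ∀ m ∈ r.support, m 0 < M := by
    intro m hm
    have : m 0 ≤ r.totalDegree := by
      refine le_trans ?_ (MvPolynomial.le_totalDegree hm)
      rw [Finsupp.sum]
      by_cases h : (0 : Fin 2) ∈ m.support
      · exact Finset.single_le_sum (fun _ _ => Nat.zero_le _) h
      · simp [Finsupp.notMem_support_iff.mp h]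
    omega
  have hinj : ∀ m₁ ∈ r.support, ∀ m₂ ∈ r.support, e m₁ = e m₂ → m₁ = m₂ := by
    intro m₁ h₁ m₂ h₂ hee
    have b₁ := hbound m₁ h₁
    have b₂ := hbound m₂ h₂
    have key : ∀ m : Fin 2 →₀ ℕ, m 0 < M → e m % M = m 0 ∧ e m / M = m 1 := by
      intro m hmlt
      constructor
      · rw [he]; simp [Nat.add_mul_mod_self_left, Nat.mod_eq_of_lt hmlt]
      · rw [he]; rw [Nat.add_mul_div_left _ _ (by omega : 0 < M), Nat.div_eq_of_lt hmlt,
          Nat.zero_add]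
    have h0 : m₁ 0 = m₂ 0 ∧ m₁ 1 = m₂ 1 := by
      obtain ⟨a1, a2⟩ := key m₁ b₁
      obtain ⟨c1, c2⟩ := key m₂ b₂
      rw [hee] at a1 a2
      exact ⟨a1 ▸ c1.symm ▸ rfl, a2 ▸ c2.symm ▸ rfl⟩
    ext i
    fin_cases i
    · exact h0.1
    · exact h0.2
  -- the substituted one-variable polynomial
  set q : Polynomial ℂ :=
    MvPolynomial.eval₂ Polynomial.C ![Polynomial.X, Polynomial.X ^ M] r with hqdef
  have hqsum : q = ∑ m ∈ r.support,
      Polynomial.C (r.coeff m) * Polynomial.X ^ (e m) := by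
    rw [hqdef, MvPolynomial.eval₂_eq']
    refine Finset.sum_congr rfl fun m _ => ?_
    congr 1
    rw [Fin.prod_univ_two]
    simp [he, pow_mul, pow_add]
  have hcoeff : ∀ m ∈ r.support, q.coeff (e m) = r.coeff m := by
    intro m hm
    rw [hqsum, Polynomial.finset_sum_coeff]
    rw [Finset.sum_eq_single m]
    · simp
    · intro m' hm' hne
      rw [Polynomial.coeff_C_mul, Polynomial.coeff_X_pow, if_neg, mul_zero]
      exact fun h => hne (hinj m' hm' m hm h.symm)
    · intro h; exact absurd hm h
  obtain ⟨m₁, hm₁, m₂, hm₂, hmne⟩ := Finset.one_lt_card.mp hcard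
  have hene : e m₁ ≠ e m₂ := fun h => hmne (hinj m₁ hm₁ m₂ hm₂ h)
  obtain ⟨t, ht0, htq⟩ := exists_ne_zero_root q (e m₁) (e m₂) hene
    (by rw [hcoeff m₁ hm₁]; exact MvPolynomial.mem_support_iff.mp hm₁)
    (by rw [hcoeff m₂ hm₂]; exact MvPolynomial.mem_support_iff.mp hm₂)
  refine ⟨t, t ^ M, ht0, pow_ne_zero _ ht0, ?_⟩
  have : Polynomial.eval t q = MvPolynomial.eval ![t, t ^ M] r := by
    rw [hqdef, ← Polynomial.coe_evalRingHom, MvPolynomial.eval₂_comp_left]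
    rw [MvPolynomial.eval]
    congr 1
    · ext c : 1; simp
    · funext i; fin_cases i <;> simp
  rw [← this, htq]
end

section
/- (Ostrowski; Newton polygon of a product.) Let f and g be nonzero polynomials in ℂ[x,y]. Then the Newton polygon of the product is the Minkowski sum of the Newton polygons: conv(supp(f·g)) = conv(supp(f)) + conv(supp(g)), where the convex hulls are taken in ℝ² and + denotes Minkowski sum of sets. -/
set_option maxHeartbeats 1000000


open MvPolynomial Pointwise

/-- The support of a polynomial in two variables, regarded as a subset of `ℝ²`. -/
def suppR (f : MvPolynomial (Fin 2) ℂ) : Set (Fin 2 → ℝ) :=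
  (fun a : Fin 2 →₀ ℕ => fun i => (a i : ℝ)) '' ↑f.support

private noncomputable def φ : (Fin 2 →₀ ℕ) → (Fin 2 → ℝ) := fun a i => (a i : ℝ)

private lemma phi_add (a b : Fin 2 →₀ ℕ) : φ (a + b) = φ a + φ b := by
  funext i
  simp [φ]

private lemma phi_inj : Function.Injective φ := by
  intro a b h
  ext i
  have h' := congrFun h i
  simp only [φ] at h'
  exact_mod_cast h'

private lemma suppR_eq (f : MvPolynomial (Fin 2) ℂ) : suppR f = φ '' ↑f.support := rfl

/-- Ostrowski: the Newton polygon of a product is the Minkowski sum of the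
Newton polygons. -/
theorem newton_polygon_mul (f g : MvPolynomial (Fin 2) ℂ) (hf : f ≠ 0) (hg : g ≠ 0) :
    convexHull ℝ (suppR (f * g)) = convexHull ℝ (suppR f) + convexHull ℝ (suppR g) := by
  classical
  have hTfin : (suppR f + suppR g).Finite :=
    Set.Finite.add (Set.Finite.image _ (Finset.finite_toSet _))
      (Set.Finite.image _ (Finset.finite_toSet _))
  -- RHS as convex hull of Minkowski sum of supports
  rw [← convexHull_add]
  set T : Set (Fin 2 → ℝ) := suppR f + suppR g with hT
  -- easy inclusion
  have hsub : suppR (f * g) ⊆ T := by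
    rintro x ⟨c, hc, rfl⟩
    have hc' : c ∈ f.support + g.support := MvPolynomial.support_mul f g hc
    obtain ⟨u, hu, v, hv, rfl⟩ := Finset.mem_add.1 hc'
    exact ⟨φ u, ⟨u, hu, rfl⟩, φ v, ⟨v, hv, rfl⟩, (phi_add u v).symm⟩
  set K := convexHull ℝ T with hK
  have hKcomp : IsCompact K := hTfin.isCompact_convexHull (𝕜 := ℝ)
  have hKconv : Convex ℝ K := convex_convexHull ℝ T
  -- extreme points of K lie in the support of f * g
  have hext : K.extremePoints ℝ ⊆ suppR (f * g) := by
    intro x hx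
    have hxT : x ∈ T := extremePoints_convexHull_subset hx
    obtain ⟨pa, ⟨a, ha, rfl⟩, pb, ⟨b, hb, rfl⟩, hxeq⟩ := hxT
    -- uniqueness of the decomposition at an extreme point
    have huniq : ∀ a' ∈ f.support, ∀ b' ∈ g.support, a' + b' = a + b → a' = a ∧ b' = b := by
      intro a' ha' b' hb' hsum
      set u : Fin 2 → ℝ := φ a + φ b' with hu
      set v : Fin 2 → ℝ := φ a' + φ b with hv
      have huK : u ∈ K := subset_convexHull ℝ T ⟨φ a, ⟨a, ha, rfl⟩, φ b', ⟨b', hb', rfl⟩, rfl⟩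
      have hvK : v ∈ K := subset_convexHull ℝ T ⟨φ a', ⟨a', ha', rfl⟩, φ b, ⟨b, hb, rfl⟩, rfl⟩
      have hsum' : u + v = x + x := by
        have h1 : φ a' + φ b' = φ a + φ b := by
          rw [← phi_add, ← phi_add, hsum]
        have hx' : φ a + φ b = x := hxeq
        rw [hu, hv, ← hx']
        rw [show φ a + φ b' + (φ a' + φ b) = (φ a' + φ b') + (φ a + φ b) by abel, h1]
      have hmid : x ∈ openSegment ℝ u v := by
        refine ⟨1/2, 1/2, by norm_num, by norm_num, by norm_num, ?_⟩
        calc (1/2 : ℝ) • u + (1/2 : ℝ) • v = (1/2 : ℝ) • (u + v) := (smul_add _ _ _).symm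
          _ = (1/2 : ℝ) • (x + x) := by rw [hsum']
          _ = x := by rw [← two_smul ℝ x, smul_smul]; norm_num
      obtain ⟨huv1, huv2⟩ := (mem_extremePoints.1 hx).2 _ huK _ hvK hmid
      have hx' : φ a + φ b = x := hxeq
      have hphib : φ a + φ b' = φ a + φ b := by
        rw [← hu, huv1]; exact hx'.symm
      have hbb : b' = b := phi_inj (add_left_cancel hphib)
      refine ⟨?_, hbb⟩
      rw [hbb] at hsum
      exact add_right_cancel hsum
    -- the coefficient of f * g at a + b is nonzero
    have hcoeff : MvPolynomial.coeff (a + b) (f * g) =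
        MvPolynomial.coeff a f * MvPolynomial.coeff b g := by
      rw [MvPolynomial.coeff_mul]
      refine Finset.sum_eq_single (a, b) ?_ ?_
      · rintro ⟨p, q⟩ hpq hne
        have hpq' : p + q = a + b := Finset.HasAntidiagonal.mem_antidiagonal.1 hpq
        by_cases hp : MvPolynomial.coeff p f = 0
        · simp [hp]
        by_cases hq : MvPolynomial.coeff q g = 0
        · simp [hq]
        obtain ⟨h1, h2⟩ := huniq p (MvPolynomial.mem_support_iff.2 hp) q
          (MvPolynomial.mem_support_iff.2 hq) hpq'
        exact absurd (by rw [h1, h2]) hne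
      · intro h
        exact absurd (by simp) h
    have hne : MvPolynomial.coeff (a + b) (f * g) ≠ 0 := by
      rw [hcoeff]
      exact mul_ne_zero (MvPolynomial.mem_support_iff.1 ha) (MvPolynomial.mem_support_iff.1 hb)
    exact ⟨a + b, MvPolynomial.mem_support_iff.2 hne, by rw [← hxeq]; exact phi_add a b⟩
  -- Krein–Milman for the polytope K
  have hKM : convexHull ℝ (K.extremePoints ℝ) = K := by
    have hfin : (K.extremePoints ℝ).Finite :=
      hTfin.subset extremePoints_convexHull_subset
    have hclosed : IsClosed (convexHull ℝ (K.extremePoints ℝ)) :=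
      (hfin.isCompact_convexHull (𝕜 := ℝ)).isClosed
    rw [← hclosed.closure_eq]
    exact closure_convexHull_extremePoints hKcomp hKconv
  apply le_antisymm
  · exact convexHull_mono hsub
  · calc K = convexHull ℝ (K.extremePoints ℝ) := hKM.symm
      _ ⊆ convexHull ℝ (suppR (f * g)) := convexHull_mono hext
end
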